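/- Let S, A, T, 𝒫 be as in the MDP context, I a finite index set, and for each i ∈ I let V_i : S × 𝒫 → ℝ satisfy the generalized Bellman form with reward R_i and a common discount γ : S × A → ℝ (the same γ for all i). Let c ∈ ℝ and w : I → ℝ, and define V_Σ(s, Π) := c + Σ_{i∈I} w_i·V_i(s, Π). Then V_Σ satisfies the generalized Bellman form with the same discount γ and reward R_Σ(s,a) := c·(1 − γ(s,a)) + Σ_{i∈I} w_i·R_i(s,a); that is, when all objectives share the same time preference, Markovian (linear scalarized) aggregation is possible. -/
import Mathlib


open scoped BigOperators

/-- The one-step expected value `V̄(s,a,π) = E_{s' ~ T(s,a)}[V(s',π)]`. -/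
noncomputable def Vbar {S A P : Type*} [Fintype S]
    (T : S → A → S → ℝ) (V : S → P → ℝ) (s : S) (a : A) (π : P) : ℝ :=
  ∑ s', T s a s' * V s' π

/-- `V` is mixture-affine with respect to the policy-mixing operation `mix`. -/
def MixAffine {S P : Type*} (mix : ℝ → P → P → P) (V : S → P → ℝ) : Prop :=
  ∀ (s : S) (β : ℝ), 0 ≤ β → β ≤ 1 → ∀ π ω : P,
    V s (mix β π ω) = β * V s π + (1 - β) * V s ω

/-- `V` satisfies the generalized Bellman form with reward `R` and discount `γ`. -/
def BellmanForm {S A P : Type*} [Fintype S] (T : S → A → S → ℝ) (act : A → P → P)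
    (V : S → P → ℝ) (R : S → A → ℝ) (γ : S → A → ℝ) : Prop :=
  ∀ (s : S) (a : A) (π : P), V s (act a π) = R s a + γ s a * Vbar T V s a π

/-- The conflict condition for `(V1, V2)` at `(s, a)`: there are policies `π, ω, l`
on which the one-step expected values of `V1` and `V2` are oppositely ordered, with
non-symmetric crossing points `β1 ≠ β2`. -/
def Conflict {S A P : Type*} [Fintype S]
    (T : S → A → S → ℝ) (V1 V2 : S → P → ℝ) (s : S) (a : A) : Prop :=
  ∃ π ω l : P,
    Vbar T V1 s a π > Vbar T V1 s a l ∧ Vbar T V1 s a l > Vbar T V1 s a ω ∧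
    Vbar T V2 s a ω > Vbar T V2 s a l ∧ Vbar T V2 s a l > Vbar T V2 s a π ∧
    (Vbar T V1 s a l - Vbar T V1 s a ω) / (Vbar T V1 s a π - Vbar T V1 s a ω) ≠
      (Vbar T V2 s a l - Vbar T V2 s a ω) / (Vbar T V2 s a π - Vbar T V2 s a ω)

/-- **Markovian aggregation under a common discount.** If all individual value functions
satisfy the generalized Bellman form with the same discount `γ`, then any linear
scalarization `Vagg = c + Σ_i w_i·V_i` satisfies the generalized Bellman form with the
same discount `γ` and reward `Ragg(s,a) = c·(1 − γ(s,a)) + Σ_i w_i·R_i(s,a)`. -/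
theorem markovian_aggregation_common_discount
    {S A P I : Type*} [Fintype S] [Nonempty S] [Fintype A] [Nonempty A] [Fintype I]
    (T : S → A → S → ℝ)
    (hT0 : ∀ s a s', 0 ≤ T s a s') (hT1 : ∀ s a, ∑ s', T s a s' = 1)
    (act : A → P → P) (mix : ℝ → P → P → P)
    (hact_mix : ∀ (a : A) (β : ℝ) (π ω : P), act a (mix β π ω) = mix β (act a π) (act a ω))
    (V : I → S → P → ℝ) (R : I → S → A → ℝ) (γ : S → A → ℝ)
    (hB : ∀ i, BellmanForm T act (V i) (R i) γ)
    (c : ℝ) (w : I → ℝ) :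
    BellmanForm T act (fun s π => c + ∑ i, w i * V i s π)
      (fun s a => c * (1 - γ s a) + ∑ i, w i * R i s a) γ := by
  intro s a π
  simp only [Vbar]
  have expand : ∑ s', T s a s' * (c + ∑ i, w i * V i s' π)
      = c + ∑ i, w i * ∑ s', T s a s' * V i s' π := by
    simp only [mul_add, Finset.sum_add_distrib, ← Finset.sum_mul, hT1, Finset.mul_sum]
    rw [Finset.sum_comm]
    ring_nf
    congr 1
    apply Finset.sum_congr rfl
    intro i _
    apply Finset.sum_congr rfl
    intro s' _
    ring
  rw [expand]
  have hBi : ∀ i, V i s (act a π) = R i s a + γ s a * ∑ s', T s a s' * V i s' π :=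
    fun i => hB i s a π
  simp only [hBi, mul_add, Finset.sum_add_distrib, Finset.mul_sum]
  ring_nf
  congr 1
  apply Finset.sum_congr rfl
  intro i _
  ring
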